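/- If $p: \mathbb{C} \to \mathbb{R}$ is a real-valued polynomial function (viewed as a polynomial in $z$ and $\bar z$), then the twist function $T(w,z) = -2\,\mathrm{Im}\left(\sum_{j\ge 1} \frac{1}{j!}\frac{\partial^j p}{\partial z^j}(z)(w-z)^j\right)$ satisfies $T(w,z) = -T(z,w)$ for all $z, w \in \mathbb{C}$. -/

import Mathlib

open Finset Complex

/-- The coefficient `A_{jk}(z) = (1/(j!k!)) ∂^{j+k}p/∂z^j∂z̄^k (z)` of the
polynomial `p(z) = ∑_{m,n ≤ d} a m n · z^m · z̄^n`. -/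
noncomputable def Acoef (d : ℕ) (a : ℕ → ℕ → ℂ) (j k : ℕ) (z : ℂ) : ℂ :=
  ∑ m ∈ Finset.range (d + 1), ∑ n ∈ Finset.range (d + 1),
    (m.choose j : ℂ) * (n.choose k : ℂ) * a m n * z ^ (m - j) * (starRingEnd ℂ z) ^ (n - k)

/-- The twist `T(w,z) = -2 Im (∑_{j≥1} (1/j!) ∂^j p/∂z^j (z) (w-z)^j)`. -/
noncomputable def Twist (d : ℕ) (a : ℕ → ℕ → ℂ) (w z : ℂ) : ℝ :=
  -2 * (∑ j ∈ Finset.Icc 1 d, Acoef d a j 0 z * (w - z) ^ j).im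

/-- `Λ(z,δ) = ∑_{j,k ≥ 1} |A_{jk}(z)| δ^{j+k}`. -/
noncomputable def Lam (d : ℕ) (a : ℕ → ℕ → ℂ) (z : ℂ) (δ : ℝ) : ℝ :=
  ∑ j ∈ Finset.Icc 1 d, ∑ k ∈ Finset.Icc 1 d,
    ‖Acoef d a j k z‖ * δ ^ (j + k)

/-- `μ(z,δ) = inf_{j,k ≥ 1, A_{jk}(z) ≠ 0} (|δ|/|A_{jk}(z)|)^{1/(j+k)}`. -/
noncomputable def muF (d : ℕ) (a : ℕ → ℕ → ℂ) (z : ℂ) (δ : ℝ) : ℝ :=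
  sInf {x : ℝ | ∃ j k : ℕ, 1 ≤ j ∧ 1 ≤ k ∧ Acoef d a j k z ≠ 0 ∧
    x = (|δ| / ‖Acoef d a j k z‖) ^ (1 / ((j : ℝ) + (k : ℝ)))}

/-- The Wirtinger derivative `∂f/∂z = (1/2)(∂f/∂x - i ∂f/∂y)`. -/
noncomputable def wDz (f : ℂ → ℂ) (z : ℂ) : ℂ :=
  (fderiv ℝ f z 1 - Complex.I * fderiv ℝ f z Complex.I) / 2

/-- The Wirtinger derivative `∂f/∂z̄ = (1/2)(∂f/∂x + i ∂f/∂y)`. -/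
noncomputable def wDzbar (f : ℂ → ℂ) (z : ℂ) : ℂ :=
  (fderiv ℝ f z 1 + Complex.I * fderiv ℝ f z Complex.I) / 2

/-- The nonisotropic pseudodistance `d_{NI}(z,w,t) = |z-w| + μ(z, t+T(w,z))`. -/
noncomputable def dNI (d : ℕ) (a : ℕ → ℕ → ℂ) (z w : ℂ) (t : ℝ) : ℝ :=
  ‖z - w‖ + muF d a z (t + Twist d a w z)

/-- For a real-valued polynomial `p` in `z` and `z̄` (encoded by coefficients `a`
with the reality condition `conj (a m n) = a n m`), the twist satisfies
`T(w,z) = -T(z,w)`. -/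
lemma binom_sum (d m : ℕ) (hm : m ≤ d) (z w : ℂ) :
    ∑ j ∈ Finset.Icc 1 d, (m.choose j : ℂ) * z ^ (m - j) * (w - z) ^ j
      = w ^ m - z ^ m := by
  have h1 : ∑ j ∈ Finset.range (d + 1), (m.choose j : ℂ) * z ^ (m - j) * (w - z) ^ j
      = w ^ m := by
    rw [← Finset.sum_subset (Finset.range_subset_range.2 (Nat.add_le_add_right hm 1))
      (by intro j hj hj'
          simp only [Finset.mem_range, not_lt] at hj'
          rw [Nat.choose_eq_zero_of_lt (by omega)]
          simp)]
    have h := add_pow (w - z) z m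
    rw [sub_add_cancel] at h
    rw [h]
    apply Finset.sum_congr rfl
    intro j hj
    ring
  have h2 : Finset.range (d + 1) = insert 0 (Finset.Icc 1 d) := by
    ext j
    simp only [Finset.mem_range, Finset.mem_insert, Finset.mem_Icc]
    omega
  rw [h2, Finset.sum_insert (by simp)] at h1
  simp only [Nat.choose_zero_right, Nat.cast_one, Nat.sub_zero, pow_zero, one_mul, mul_one] at h1
  linear_combination h1

lemma hsum (d : ℕ) (a : ℕ → ℕ → ℂ) (z w : ℂ) :
    ∑ j ∈ Finset.Icc 1 d, Acoef d a j 0 z * (w - z) ^ j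
      = ∑ m ∈ Finset.range (d + 1), ∑ n ∈ Finset.range (d + 1),
          a m n * (starRingEnd ℂ z) ^ n * (w ^ m - z ^ m) := by
  unfold Acoef
  simp only [Finset.sum_mul]
  rw [Finset.sum_comm]
  apply Finset.sum_congr rfl
  intro m hm
  rw [Finset.sum_comm]
  apply Finset.sum_congr rfl
  intro n hn
  have hb := binom_sum d m (Nat.lt_succ_iff.mp (Finset.mem_range.mp hm)) z w
  calc ∑ j ∈ Finset.Icc 1 d,
        (m.choose j : ℂ) * (n.choose 0 : ℂ) * a m n * z ^ (m - j) *
          (starRingEnd ℂ z) ^ (n - 0) * (w - z) ^ j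
      = (a m n * (starRingEnd ℂ z) ^ n) *
          ∑ j ∈ Finset.Icc 1 d, (m.choose j : ℂ) * z ^ (m - j) * (w - z) ^ j := by
        rw [Finset.mul_sum]
        apply Finset.sum_congr rfl
        intro j hj
        simp only [Nat.choose_zero_right, Nat.cast_one, Nat.sub_zero]
        ring
    _ = a m n * (starRingEnd ℂ z) ^ n * (w ^ m - z ^ m) := by rw [hb]

theorem twist_antisymm (d : ℕ) (a : ℕ → ℕ → ℂ)
    (hreal : ∀ m n, (starRingEnd ℂ) (a m n) = a n m) (z w : ℂ) :
    Twist d a w z = - Twist d a z w := by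
  unfold Twist
  rw [hsum d a z w, hsum d a w z]
  set S1 := ∑ m ∈ Finset.range (d + 1), ∑ n ∈ Finset.range (d + 1),
      a m n * (starRingEnd ℂ z) ^ n * (w ^ m - z ^ m) with hS1
  set S2 := ∑ m ∈ Finset.range (d + 1), ∑ n ∈ Finset.range (d + 1),
      a m n * (starRingEnd ℂ w) ^ n * (z ^ m - w ^ m) with hS2
  have key : (S1 + S2).im = 0 := by
    rw [← Complex.conj_eq_iff_im]
    rw [map_add]
    have c1 : (starRingEnd ℂ) S1 = ∑ m ∈ Finset.range (d + 1), ∑ n ∈ Finset.range (d + 1),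
        a m n * z ^ m * ((starRingEnd ℂ w) ^ n - (starRingEnd ℂ z) ^ n) := by
      rw [hS1, map_sum]
      rw [Finset.sum_comm]
      apply Finset.sum_congr rfl
      intro m hm
      rw [map_sum]
      apply Finset.sum_congr rfl
      intro n hn
      simp only [map_mul, map_sub, map_pow, Complex.conj_conj, hreal]
    have c2 : (starRingEnd ℂ) S2 = ∑ m ∈ Finset.range (d + 1), ∑ n ∈ Finset.range (d + 1),
        a m n * w ^ m * ((starRingEnd ℂ z) ^ n - (starRingEnd ℂ w) ^ n) := by
      rw [hS2, map_sum]
      rw [Finset.sum_comm]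
      apply Finset.sum_congr rfl
      intro m hm
      rw [map_sum]
      apply Finset.sum_congr rfl
      intro n hn
      simp only [map_mul, map_sub, map_pow, Complex.conj_conj, hreal]
    rw [c1, c2, hS1, hS2, ← Finset.sum_add_distrib, ← Finset.sum_add_distrib]
    apply Finset.sum_congr rfl
    intro m hm
    rw [← Finset.sum_add_distrib, ← Finset.sum_add_distrib]
    apply Finset.sum_congr rfl
    intro n hn
    ring
  rw [Complex.add_im] at key
  linarith
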